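/- Let μ, ν be finite positive measures on (Ω, F) with ν ≪ μ. Then the map π ↦ ∫_Ω e^{−f_π(μ)} dμ on finite measurable partitions of Ω is increasing with respect to refinement: if π' refines π, then ∫_Ω e^{−f_π(μ)} dμ ≤ ∫_Ω e^{−f_{π'}(μ)} dμ. -/

import Mathlib

open MeasureTheory Set
open scoped ENNReal Classical

/-- A finite measurable partition of `Ω`: a finite collection of pairwise disjoint measurable
sets whose union is `Ω`. -/
def IsFinitePartition {Ω : Type*} [MeasurableSpace Ω] (π : Finset (Set Ω)) : Prop :=
  (∀ A ∈ π, MeasurableSet A) ∧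
    (π : Set (Set Ω)).PairwiseDisjoint id ∧
    ⋃₀ (π : Set (Set Ω)) = Set.univ

/-- `π'` refines `π` if every element of `π` is a union of elements of `π'`. -/
def Refines {Ω : Type*} (π' π : Finset (Set Ω)) : Prop :=
  ∀ A ∈ π, ∃ S ⊆ π', A = ⋃₀ (S : Set (Set Ω))

/-- `f_π(μ) := Σ_{A ∈ π, μ(A) > 0} 1_A ⬝ ν(A)/μ(A)`. -/
noncomputable def partFn {Ω : Type*} [MeasurableSpace Ω] (ν lam : Measure Ω)
    (π : Finset (Set Ω)) (x : Ω) : ℝ :=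
  ∑ A ∈ π, if lam A ≠ 0 ∧ x ∈ A then (ν A).toReal / (lam A).toReal else 0

section Aux

variable {Ω : Type*} [MeasurableSpace Ω] (μ ν : Measure Ω)

/-- The constant value of `f_π` on the piece `A`. -/
noncomputable def pc (A : Set Ω) : ℝ :=
  if μ A ≠ 0 then (ν A).toReal / (μ A).toReal else 0

lemma partFn_eq (π : Finset (Set Ω)) :
    partFn ν μ π = fun x => ∑ A ∈ π, A.indicator (fun _ => pc μ ν A) x := by
  funext x
  refine Finset.sum_congr rfl fun A _ => ?_
  by_cases h1 : μ A ≠ 0 <;> by_cases h2 : x ∈ A <;>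
    simp [Set.indicator, pc, h1, h2]

lemma pc_nonneg (A : Set Ω) : 0 ≤ pc μ ν A := by
  unfold pc; split_ifs <;> positivity

lemma partFn_nonneg (π : Finset (Set Ω)) (x : Ω) : 0 ≤ partFn ν μ π x := by
  refine Finset.sum_nonneg fun A _ => ?_
  split_ifs <;> positivity

variable [IsFiniteMeasure μ] [IsFiniteMeasure ν]

lemma partFn_integrable {π : Finset (Set Ω)} (hm : ∀ A ∈ π, MeasurableSet A) :
    Integrable (partFn ν μ π) μ := by
  rw [partFn_eq]
  exact integrable_finset_sum _ fun A hA => (integrable_const _).indicator (hm A hA)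

lemma partFn_measurable {π : Finset (Set Ω)} (hm : ∀ A ∈ π, MeasurableSet A) :
    Measurable (partFn ν μ π) := by
  rw [partFn_eq]
  exact Finset.measurable_sum _ fun A hA => measurable_const.indicator (hm A hA)

lemma exp_neg_partFn_integrable {π : Finset (Set Ω)} (hm : ∀ A ∈ π, MeasurableSet A) :
    Integrable (fun x => Real.exp (-(partFn ν μ π x))) μ := by
  refine ⟨((partFn_measurable μ ν hm).neg.exp).aestronglyMeasurable, ?_⟩
  refine HasFiniteIntegral.of_bounded (C := 1) (Filter.Eventually.of_forall fun x => ?_)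
  rw [Real.norm_eq_abs, abs_of_pos (Real.exp_pos _)]
  exact Real.exp_le_one_iff.2 (neg_nonpos.2 (partFn_nonneg μ ν π x))

lemma partFn_eq_on {π : Finset (Set Ω)} (hπ : IsFinitePartition π) {A : Set Ω}
    (hA : A ∈ π) {x : Ω} (hx : x ∈ A) : partFn ν μ π x = pc μ ν A := by
  unfold partFn
  rw [Finset.sum_eq_single A]
  · by_cases h : μ A ≠ 0 <;> simp [pc, h, hx]
  · intro B hB hBA
    rw [if_neg]
    rintro ⟨-, hxB⟩
    exact Set.disjoint_left.1 (hπ.2.1 hB hA hBA) hxB hx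
  · intro h; exact absurd hA h

lemma setIntegral_partFn_le (hac : ν ≪ μ) {π' : Finset (Set Ω)}
    (hπ' : IsFinitePartition π') {A : Set Ω} {S : Finset (Set Ω)} (hS : S ⊆ π')
    (hAS : A = ⋃₀ (S : Set (Set Ω))) :
    ∫ x in A, partFn ν μ π' x ∂μ ≤ (ν A).toReal := by
  have hSdisj : (S : Set (Set Ω)).PairwiseDisjoint id :=
    hπ'.2.1.subset (Finset.coe_subset.2 hS)
  rw [partFn_eq]
  rw [integral_finset_sum _ (fun B hB =>
    (((integrable_const _).indicator (hπ'.1 B hB)).restrict))]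
  have hterm : ∀ B ∈ π',
      ∫ x in A, B.indicator (fun _ => pc μ ν B) x ∂μ = (μ (A ∩ B)).toReal * pc μ ν B := by
    intro B hB
    rw [setIntegral_indicator (hπ'.1 B hB), setIntegral_const, smul_eq_mul]; rfl
  calc ∑ B ∈ π', ∫ x in A, B.indicator (fun _ => pc μ ν B) x ∂μ
      = ∑ B ∈ S, ∫ x in A, B.indicator (fun _ => pc μ ν B) x ∂μ := by
        refine (Finset.sum_subset hS fun B hB hBS => ?_).symm
        have : A ∩ B = ∅ := by
          ext x
          simp only [Set.mem_inter_iff, Set.mem_empty_iff_false, iff_false, not_and]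
          intro hxA hxB
          rw [hAS] at hxA
          obtain ⟨C, hC, hxC⟩ := hxA
          have hCB : C ≠ B := fun h => hBS (h ▸ hC)
          exact Set.disjoint_left.1 (hπ'.2.1 (Finset.mem_coe.2 (hS hC)) (Finset.mem_coe.2 hB) hCB) hxC hxB
        rw [hterm B hB, this]
        simp
    _ ≤ ∑ B ∈ S, (ν B).toReal := by
        refine Finset.sum_le_sum fun B hB => ?_
        have hBA : A ∩ B = B := by
          rw [Set.inter_eq_right]
          rw [hAS]
          exact Set.subset_sUnion_of_mem hB
        rw [hterm B (hS hB), hBA]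
        unfold pc
        split_ifs with h
        · have hμt : (μ B).toReal ≠ 0 :=
            ENNReal.toReal_ne_zero.2 ⟨h, measure_ne_top μ B⟩
          rw [mul_div_assoc', mul_comm, mul_div_assoc, div_self hμt, mul_one]
        · simp [ENNReal.toReal_nonneg]
    _ = (ν A).toReal := by
        rw [hAS, Set.sUnion_eq_biUnion, Finset.set_biUnion_coe]
        have hm : ν (⋃ x ∈ S, (x : Set Ω)) = ∑ B ∈ S, ν B :=
          measure_biUnion_finset hSdisj fun B hB => hπ'.1 B (hS hB)
        rw [hm, ENNReal.toReal_sum fun B _ => measure_ne_top ν B]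

/-- Key per-piece estimate. -/
lemma piece_le (hac : ν ≪ μ) {π' : Finset (Set Ω)} (hπ' : IsFinitePartition π')
    {A : Set Ω} (hA : MeasurableSet A) {S : Finset (Set Ω)} (hS : S ⊆ π')
    (hAS : A = ⋃₀ (S : Set (Set Ω))) :
    (μ A).toReal * Real.exp (-(pc μ ν A)) ≤
      ∫ x in A, Real.exp (-(partFn ν μ π' x)) ∂μ := by
  by_cases h0 : μ A = 0
  · simp only [h0, ENNReal.toReal_zero, zero_mul]
    exact setIntegral_nonneg hA fun x _ => (Real.exp_pos _).le
  · have hμt : (μ A).toReal ≠ 0 := ENNReal.toReal_ne_zero.2 ⟨h0, measure_ne_top μ A⟩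
    have hμpos : 0 < (μ A).toReal := lt_of_le_of_ne ENNReal.toReal_nonneg (Ne.symm hμt)
    set c : ℝ := (ν A).toReal / (μ A).toReal with hc
    have hpc : pc μ ν A = c := if_pos h0
    have hcmul : c * (μ A).toReal = (ν A).toReal := div_mul_cancel₀ _ hμt
    have hIntOn : IntegrableOn (partFn ν μ π') A μ :=
      (partFn_integrable μ ν hπ'.1).integrableOn
    have hExpIntOn : IntegrableOn (fun x => Real.exp (-(partFn ν μ π' x))) A μ :=
      (exp_neg_partFn_integrable μ ν hπ'.1).integrableOn
    have hint : ∫ x in A, partFn ν μ π' x ∂μ ≤ (ν A).toReal :=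
      setIntegral_partFn_le μ ν hac hπ' hS hAS
    rw [hpc]
    calc (μ A).toReal * Real.exp (-c)
        = Real.exp (-c) * ((1 + c) * (μ A).toReal - (ν A).toReal) := by
          rw [add_mul, one_mul, hcmul]; ring
      _ ≤ Real.exp (-c) * ((1 + c) * (μ A).toReal - ∫ x in A, partFn ν μ π' x ∂μ) := by
          apply mul_le_mul_of_nonneg_left (sub_le_sub_left hint _) (Real.exp_pos _).le
      _ = ∫ x in A, Real.exp (-c) * (1 + c - partFn ν μ π' x) ∂μ := by
          rw [integral_const_mul]
          congr 1
          rw [integral_sub ((integrable_const _).integrableOn) hIntOn,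
            setIntegral_const, smul_eq_mul, mul_comm]; rfl
      _ ≤ ∫ x in A, Real.exp (-(partFn ν μ π' x)) ∂μ := by
          refine setIntegral_mono_on ?_ hExpIntOn hA fun x _ => ?_
          · exact (((integrable_const _).integrableOn.sub hIntOn).const_mul _)
          · have h1 : Real.exp (-(partFn ν μ π' x)) =
                Real.exp (-c) * Real.exp (c - partFn ν μ π' x) := by
              rw [← Real.exp_add]; ring_nf
            rw [h1]
            refine mul_le_mul_of_nonneg_left ?_ (Real.exp_pos _).le
            have := Real.add_one_le_exp (c - partFn ν μ π' x)
            linarith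

end Aux

/-- Let `μ, ν` be finite measures on `(Ω, F)` with `ν ≪ μ`. The map
`π ↦ ∫ e^{-f_π(μ)} dμ` on finite measurable partitions is increasing with respect to
refinement: if `π'` refines `π` then `∫ e^{-f_π(μ)} dμ ≤ ∫ e^{-f_{π'}(μ)} dμ`. -/
theorem stmt17 {Ω : Type*} [MeasurableSpace Ω] (μ ν : Measure Ω)
    [IsFiniteMeasure μ] [IsFiniteMeasure ν] (hac : ν ≪ μ)
    (π π' : Finset (Set Ω)) (hπ : IsFinitePartition π) (hπ' : IsFinitePartition π')
    (href : Refines π' π) :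
    ∫ x, Real.exp (-(partFn ν μ π x)) ∂μ ≤ ∫ x, Real.exp (-(partFn ν μ π' x)) ∂μ := by
  have hdecomp : ∀ (σ : Finset (Set Ω)), IsFinitePartition σ →
      ∀ (g : Ω → ℝ), Integrable g μ →
      ∫ x, g x ∂μ = ∑ A ∈ σ, ∫ x in A, g x ∂μ := by
    intro σ hσ g hg
    rw [← setIntegral_univ, ← hσ.2.2, Set.sUnion_eq_biUnion]
    exact integral_biUnion_finset σ hσ.1 hσ.2.1 fun A _ => hg.integrableOn
  rw [hdecomp π hπ _ (exp_neg_partFn_integrable μ ν hπ.1),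
    hdecomp π' hπ' _ (exp_neg_partFn_integrable μ ν hπ'.1)]
  have hstep : ∀ A ∈ π, ∫ x in A, Real.exp (-(partFn ν μ π x)) ∂μ ≤
      ∫ x in A, Real.exp (-(partFn ν μ π' x)) ∂μ := by
    intro A hA
    obtain ⟨S, hS, hAS⟩ := href A hA
    have hAmeas : MeasurableSet A := hπ.1 A hA
    have heq : ∫ x in A, Real.exp (-(partFn ν μ π x)) ∂μ =
        (μ A).toReal * Real.exp (-(pc μ ν A)) := by
      rw [setIntegral_congr_fun hAmeas
        (fun x hx => by rw [partFn_eq_on μ ν hπ hA hx]), setIntegral_const, smul_eq_mul]; rfl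
    rw [heq]
    exact piece_le μ ν hac hπ' hAmeas hS hAS
  have hsum : ∑ A ∈ π, ∫ x in A, Real.exp (-(partFn ν μ π x)) ∂μ ≤
      ∑ A ∈ π, ∫ x in A, Real.exp (-(partFn ν μ π' x)) ∂μ :=
    Finset.sum_le_sum hstep
  refine hsum.trans ?_
  -- now compare ∑ over π of ∫_A g' with ∑ over π' of ∫_B g'
  rw [← hdecomp π hπ _ (exp_neg_partFn_integrable μ ν hπ'.1),
    ← hdecomp π' hπ' _ (exp_neg_partFn_integrable μ ν hπ'.1)]
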